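/- For every real γ > 0, the sequence N ↦ ((⌊γ·N⌋ : ℝ) − 1)/((⌊γ·N⌋ : ℝ) + N) (indexed by natural numbers N) converges to γ/(γ + 1) as N → ∞. Consequently, the price of fairness of the cycle construction in Theorem 8 (weighted fairness with no cycle cap, a cycle through N+1 highly-sensitized patients versus a cycle through ⌊(γ+1)N⌋ lowly-sensitized patients) is at least γ/(γ + 1). -/

import Mathlib

/-- The price-of-fairness sequence of the cycle construction in Theorem 8
converges to `γ/(γ+1)`; consequently the price of fairness of the weighted
fairness rule with no cycle cap is at least `γ/(γ+1)` (values of the sequence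
come arbitrarily close to, i.e. within any `ε` of, `γ/(γ+1)`). -/
theorem weighted_fairness_cycle_pof (γ : ℝ) (hγ : 0 < γ) :
    Filter.Tendsto
      (fun N : ℕ => ((⌊γ * N⌋ : ℝ) - 1) / ((⌊γ * N⌋ : ℝ) + N))
      Filter.atTop (nhds (γ / (γ + 1))) ∧
    ∀ ε > (0 : ℝ), ∃ N : ℕ,
      ((⌊γ * N⌋ : ℝ) - 1) / ((⌊γ * N⌋ : ℝ) + N) > γ / (γ + 1) - ε := by
  have hinv : Filter.Tendsto (fun N : ℕ => (1 : ℝ) / N) Filter.atTop (nhds 0) :=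
    tendsto_one_div_atTop_nhds_zero_nat
  have hg : Filter.Tendsto (fun N : ℕ => (⌊γ * N⌋ : ℝ) / N) Filter.atTop (nhds γ) := by
    have hlow : Filter.Tendsto (fun N : ℕ => γ - 1 / N) Filter.atTop (nhds γ) := by
      simpa using (tendsto_const_nhds (x := γ) (f := (Filter.atTop : Filter ℕ))).sub hinv
    refine tendsto_of_tendsto_of_tendsto_of_le_of_le' hlow tendsto_const_nhds ?_ ?_
    · filter_upwards [Filter.eventually_gt_atTop 0] with N hN
      have hN' : (0:ℝ) < N := by exact_mod_cast hN
      rw [sub_le_iff_le_add, ← add_div, le_div_iff₀ hN']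
      have := Int.sub_one_lt_floor (γ * N)
      nlinarith [this]
    · filter_upwards [Filter.eventually_gt_atTop 0] with N hN
      have hN' : (0:ℝ) < N := by exact_mod_cast hN
      rw [div_le_iff₀ hN']
      exact Int.floor_le (γ * N)
  have key : Filter.Tendsto
      (fun N : ℕ => ((⌊γ * N⌋ : ℝ) - 1) / ((⌊γ * N⌋ : ℝ) + N))
      Filter.atTop (nhds (γ / (γ + 1))) := by
    have hnum : Filter.Tendsto (fun N : ℕ => (⌊γ * N⌋ : ℝ) / N - 1 / N)
        Filter.atTop (nhds γ) := by simpa using hg.sub hinv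
    have hden : Filter.Tendsto (fun N : ℕ => (⌊γ * N⌋ : ℝ) / N + 1)
        Filter.atTop (nhds (γ + 1)) := hg.add tendsto_const_nhds
    have hne : γ + 1 ≠ 0 := by linarith
    have := hnum.div hden hne
    refine this.congr' ?_
    filter_upwards [Filter.eventually_gt_atTop 0] with N hN
    have hN' : (0:ℝ) < N := by exact_mod_cast hN
    simp only [Pi.div_apply]
    field_simp
  refine ⟨key, fun ε hε => ?_⟩
  have : ∀ᶠ N : ℕ in Filter.atTop,
      ((⌊γ * N⌋ : ℝ) - 1) / ((⌊γ * N⌋ : ℝ) + N) > γ / (γ + 1) - ε :=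
    key.eventually (eventually_gt_nhds (by linarith))
  exact this.exists
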